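/- Consider the two residual expressions of the Cabello-type Bell expression: E_B(a,b) = a_0^{(1)} b_0^{(1)} + a_1^{(1)} b_0^{(2)} + a_0^{(2)} b_1^{(1)} + a_1^{(2)} b_1^{(2)} + a_0^{(3)} b_0^{(1)} b_1^{(1)} + a_1^{(3)} b_0^{(2)} b_1^{(2)} and E_C(a,c) = a_0^{(1)} a_1^{(1)} c_0 + a_0^{(2)} a_1^{(2)} c_1 − a_0^{(3)} a_1^{(3)} c_0 c_1, where a : {1,2,3} → {−1,+1}², b : {1,2} → {−1,+1}², c ∈ {−1,+1}². Then: (i) there exists a deterministic strategy (a,b) with E_B(a,b) = 6 (its algebraic maximum); (ii) there exists a deterministic strategy (a,c) with E_C(a,c) = 3 (its algebraic maximum); yet (iii) for every deterministic strategy (a,b,c), E_B(a,b) + E_C(a,c) ≤ 7 < 9. -/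
import Mathlib


/-- The residual Alice–Bob expression `E_B` of the reduced Cabello Bell expression,
evaluated on a deterministic strategy; each outcome is a pair of `±1` bits. -/
def EB (a : Fin 3 → ℤ × ℤ) (b : Fin 2 → ℤ × ℤ) : ℤ :=
  (a 0).1 * (b 0).1 + (a 0).2 * (b 1).1
    + (a 1).1 * (b 0).2 + (a 1).2 * (b 1).2
    + (a 2).1 * ((b 0).1 * (b 0).2) + (a 2).2 * ((b 1).1 * (b 1).2)

/-- The residual Alice–Charlie expression `E_C` of the reduced Cabello Bell
expression, evaluated on a deterministic strategy. -/
def EC (a : Fin 3 → ℤ × ℤ) (c : ℤ × ℤ) : ℤ :=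
  (a 0).1 * (a 0).2 * c.1 + (a 1).1 * (a 1).2 * c.2
    - (a 2).1 * (a 2).2 * (c.1 * c.2)

/-- A predicate saying each outcome bit is `±1`-valued. -/
def PM (x : ℤ) : Prop := x = 1 ∨ x = -1

set_option maxHeartbeats 4000000 in
/-- Key brute-force bound: for `±1`-valued bits, the combined residual
expression is at most `7`. -/
lemma cabello_key (x1 x2 y1 y2 z1 z2 u1 u2 v1 v2 w1 w2 : ℤ)
    (hx1 : PM x1) (hx2 : PM x2) (hy1 : PM y1) (hy2 : PM y2)
    (hz1 : PM z1) (hz2 : PM z2) (hu1 : PM u1) (hu2 : PM u2)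
    (hv1 : PM v1) (hv2 : PM v2) (hw1 : PM w1) (hw2 : PM w2) :
    x1*u1 + x2*v1 + y1*u2 + y2*v2 + z1*(u1*u2) + z2*(v1*v2)
      + (x1*x2*w1 + y1*y2*w2 - z1*z2*(w1*w2)) ≤ 7 := by
  rcases hx1 with rfl|rfl <;> rcases hx2 with rfl|rfl <;>
  rcases hy1 with rfl|rfl <;> rcases hy2 with rfl|rfl <;>
  rcases hz1 with rfl|rfl <;> rcases hz2 with rfl|rfl <;>
  rcases hu1 with rfl|rfl <;> rcases hu2 with rfl|rfl <;>
  rcases hv1 with rfl|rfl <;> rcases hv2 with rfl|rfl <;>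
  rcases hw1 with rfl|rfl <;> rcases hw2 with rfl|rfl <;> decide

/-- (i) some deterministic strategy attains `E_B = 6`, its algebraic
maximum; (ii) some deterministic strategy attains `E_C = 3`, its algebraic maximum;
yet (iii) every deterministic strategy satisfies `E_B + E_C ≤ 7 < 9`: the two residual
expressions are individually classically saturated but classically incompatible. -/
theorem cabello_residual_incompatibility :
    (∃ (a : Fin 3 → ℤ × ℤ) (b : Fin 2 → ℤ × ℤ),
      (∀ k, PM (a k).1 ∧ PM (a k).2) ∧ (∀ l, PM (b l).1 ∧ PM (b l).2) ∧
        EB a b = 6) ∧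
    (∃ (a : Fin 3 → ℤ × ℤ) (c : ℤ × ℤ),
      (∀ k, PM (a k).1 ∧ PM (a k).2) ∧ (PM c.1 ∧ PM c.2) ∧
        EC a c = 3) ∧
    ((∀ (a : Fin 3 → ℤ × ℤ) (b : Fin 2 → ℤ × ℤ) (c : ℤ × ℤ),
      (∀ k, PM (a k).1 ∧ PM (a k).2) → (∀ l, PM (b l).1 ∧ PM (b l).2) →
        (PM c.1 ∧ PM c.2) → EB a b + EC a c ≤ 7) ∧ (7 : ℤ) < 9) := by
  refine ⟨⟨fun _ => (1, 1), fun _ => (1, 1), ?_, ?_, ?_⟩,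
    ⟨![(1, 1), (1, 1), (1, -1)], (1, 1), ?_, ?_, ?_⟩, ?_, by norm_num⟩
  · intro k; exact ⟨Or.inl rfl, Or.inl rfl⟩
  · intro l; exact ⟨Or.inl rfl, Or.inl rfl⟩
  · decide
  · intro k
    fin_cases k <;> simp [PM]
  · exact ⟨Or.inl rfl, Or.inl rfl⟩
  · decide
  · intro a b c ha hb hc
    have := cabello_key (a 0).1 (a 0).2 (a 1).1 (a 1).2 (a 2).1 (a 2).2
      (b 0).1 (b 0).2 (b 1).1 (b 1).2 c.1 c.2
      (ha 0).1 (ha 0).2 (ha 1).1 (ha 1).2 (ha 2).1 (ha 2).2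
      (hb 0).1 (hb 0).2 (hb 1).1 (hb 1).2 hc.1 hc.2
    simp only [EB, EC]
    linarith
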